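/- Let H_b ∈ ℂ^{N_r×N_t} and H_e ∈ ℂ^{N_e×N_t} be complex matrices such that Δ := H_bᴴH_b − H_eᴴH_e is positive semidefinite, and let X ∈ ℂ^{N_t×N_t} be Hermitian positive semidefinite. Define Y := I + Δ^{1/2} X Δ^{1/2} − Δ^{1/2} X H_eᴴ (I + H_e X H_eᴴ)^{-1} H_e X Δ^{1/2}. Then: (i) Y − I is positive semidefinite (in particular Y is Hermitian positive definite); (ii) the 2×2 block matrix [[I + Δ^{1/2} X Δ^{1/2} − Y, Δ^{1/2} X H_eᴴ], [H_e X Δ^{1/2}, I + H_e X H_eᴴ]] is positive semidefinite; and (iii) det Y = det(I + H_b X H_bᴴ) / det(I + H_e X H_eᴴ). -/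

import Mathlib

open Matrix
open scoped ComplexOrder

namespace Matrix.PosSemidef

/-- The square root of a positive semidefinite matrix, as `Matrix.PosSemidef.sqrt` was defined
in the older Mathlib (removed since in favour of `CFC.sqrt`). -/
noncomputable def sqrt {n 𝕜 : Type*} [Fintype n] [RCLike 𝕜] [DecidableEq n] {A : Matrix n n 𝕜}
    (hA : PosSemidef A) : Matrix n n 𝕜 :=
  hA.1.eigenvectorUnitary.1 * diagonal ((↑) ∘ (√·) ∘ hA.1.eigenvalues) *
  (star hA.1.eigenvectorUnitary : Matrix n n 𝕜)

lemma posSemidef_sqrt {n 𝕜 : Type*} [Fintype n] [RCLike 𝕜] [DecidableEq n] {A : Matrix n n 𝕜}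
    (hA : PosSemidef A) : (sqrt hA).PosSemidef := by
  have hD : (diagonal ((↑) ∘ (√·) ∘ hA.1.eigenvalues : n → 𝕜)).PosSemidef := by
    rw [posSemidef_diagonal_iff]
    intro i
    simp only [Function.comp_apply]
    exact_mod_cast Real.sqrt_nonneg _
  have := hD.mul_mul_conjTranspose_same (hA.1.eigenvectorUnitary : Matrix n n 𝕜)
  unfold sqrt
  rwa [star_eq_conjTranspose]

lemma sqrt_mul_self {n 𝕜 : Type*} [Fintype n] [RCLike 𝕜] [DecidableEq n] {A : Matrix n n 𝕜}
    (hA : PosSemidef A) : sqrt hA * sqrt hA = A := by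
  conv_rhs => rw [hA.1.spectral_theorem, Unitary.conjStarAlgAut_apply]
  unfold sqrt
  have hU : (star hA.1.eigenvectorUnitary : Matrix n n 𝕜) * hA.1.eigenvectorUnitary.1 = 1 :=
    Unitary.coe_star_mul_self _
  have hDD : diagonal ((↑) ∘ (√·) ∘ hA.1.eigenvalues : n → 𝕜)
      * diagonal ((↑) ∘ (√·) ∘ hA.1.eigenvalues : n → 𝕜)
      = diagonal (RCLike.ofReal ∘ hA.1.eigenvalues) := by
    rw [diagonal_mul_diagonal]
    congr 1
    funext i
    simp only [Function.comp_apply]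
    rw [← RCLike.ofReal_mul, Real.mul_self_sqrt (hA.eigenvalues_nonneg i)]
  calc _ = hA.1.eigenvectorUnitary.1 * diagonal ((↑) ∘ (√·) ∘ hA.1.eigenvalues : n → 𝕜)
        * ((star hA.1.eigenvectorUnitary : Matrix n n 𝕜) * hA.1.eigenvectorUnitary.1)
        * diagonal ((↑) ∘ (√·) ∘ hA.1.eigenvalues : n → 𝕜)
        * (star hA.1.eigenvectorUnitary : Matrix n n 𝕜) := by
          simp only [Matrix.mul_assoc]
    _ = _ := by rw [hU, Matrix.mul_one, Matrix.mul_assoc _ (diagonal _) (diagonal _), hDD]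

end Matrix.PosSemidef

/-- achievability direction of Lemma 1 of the paper: the choice
`Y = F(X)` is feasible for the linear matrix inequality and attains the
secrecy-rate determinant ratio. -/
theorem stmt_4 {Nr Nt Ne : ℕ}
    (Hb : Matrix (Fin Nr) (Fin Nt) ℂ) (He : Matrix (Fin Ne) (Fin Nt) ℂ)
    (X : Matrix (Fin Nt) (Fin Nt) ℂ) (hX : X.PosSemidef)
    (hΔ : (Hbᴴ * Hb - Heᴴ * He).PosSemidef)
    (Y : Matrix (Fin Nt) (Fin Nt) ℂ)
    (hY : Y = 1 + hΔ.sqrt * X * hΔ.sqrt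
        - hΔ.sqrt * X * Heᴴ * (1 + He * X * Heᴴ)⁻¹ * He * X * hΔ.sqrt) :
    (Y - 1).PosSemidef ∧ Y.PosDef ∧
    (Matrix.fromBlocks
        (1 + hΔ.sqrt * X * hΔ.sqrt - Y) (hΔ.sqrt * X * Heᴴ)
        (He * X * hΔ.sqrt) (1 + He * X * Heᴴ)).PosSemidef ∧
    Y.det = (1 + Hb * X * Hbᴴ).det / (1 + He * X * Heᴴ).det := by
  set S := hΔ.sqrt with hSdef
  have hS : S.PosSemidef := hΔ.posSemidef_sqrt
  have hSh : Sᴴ = S := hS.isHermitian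
  have hSS : S * S = Hbᴴ * Hb - Heᴴ * He := hΔ.sqrt_mul_self
  set R := hX.sqrt with hRdef
  have hR : R.PosSemidef := hX.posSemidef_sqrt
  have hRh : Rᴴ = R := hR.isHermitian
  have hRR : R * R = X := hX.sqrt_mul_self
  have hXh : Xᴴ = X := hX.isHermitian
  set G := He * R with hGdef
  have hGc : Gᴴ = R * Heᴴ := by rw [hGdef, conjTranspose_mul, hRh]
  have hDG : 1 + He * X * Heᴴ = 1 + G * Gᴴ := by
    rw [hGc, hGdef, ← hRR]; simp only [Matrix.mul_assoc]
  have hP : (1 + Gᴴ * G).PosDef :=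
    Matrix.PosDef.one.add_posSemidef (posSemidef_conjTranspose_mul_self G)
  have hQ : (1 + G * Gᴴ).PosDef :=
    Matrix.PosDef.one.add_posSemidef (posSemidef_self_mul_conjTranspose G)
  have hPd : IsUnit (1 + Gᴴ * G).det := hP.det_pos.ne'.isUnit
  have hQd : IsUnit (1 + G * Gᴴ).det := hQ.det_pos.ne'.isUnit
  have comm : Gᴴ * (1 + G * Gᴴ) = (1 + Gᴴ * G) * Gᴴ := by
    simp only [Matrix.mul_add, Matrix.add_mul, Matrix.mul_one, Matrix.one_mul,
      Matrix.mul_assoc]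
  have hinv : Gᴴ * (1 + G * Gᴴ)⁻¹ = (1 + Gᴴ * G)⁻¹ * Gᴴ := by
    calc Gᴴ * (1 + G * Gᴴ)⁻¹
        = (1 + Gᴴ * G)⁻¹ * ((1 + Gᴴ * G) * Gᴴ * (1 + G * Gᴴ)⁻¹) := by
          rw [← Matrix.mul_assoc, ← Matrix.mul_assoc,
            Matrix.nonsing_inv_mul _ hPd, Matrix.one_mul]
      _ = (1 + Gᴴ * G)⁻¹ * (Gᴴ * (1 + G * Gᴴ) * (1 + G * Gᴴ)⁻¹) := by rw [comm]
      _ = (1 + Gᴴ * G)⁻¹ * Gᴴ := by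
          rw [Matrix.mul_assoc Gᴴ, Matrix.mul_nonsing_inv _ hQd, Matrix.mul_one]
  have key : 1 - Gᴴ * (1 + G * Gᴴ)⁻¹ * G = (1 + Gᴴ * G)⁻¹ := by
    rw [hinv]
    calc 1 - (1 + Gᴴ * G)⁻¹ * Gᴴ * G
        = (1 + Gᴴ * G)⁻¹ * (1 + Gᴴ * G) - (1 + Gᴴ * G)⁻¹ * (Gᴴ * G) := by
          rw [Matrix.nonsing_inv_mul _ hPd, Matrix.mul_assoc]
      _ = (1 + Gᴴ * G)⁻¹ * (1 + Gᴴ * G - Gᴴ * G) := by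
          rw [Matrix.mul_sub]
      _ = (1 + Gᴴ * G)⁻¹ := by rw [add_sub_cancel_right, Matrix.mul_one]
  have hSRc : (S * R)ᴴ = R * S := by rw [conjTranspose_mul, hSh, hRh]
  have hY1 : Y - 1 = (S * R) * (1 + Gᴴ * G)⁻¹ * (S * R)ᴴ := by
    rw [hSRc, hY, hDG, ← key, ← hRR]
    simp only [hGdef, conjTranspose_mul, hRh]
    simp only [Matrix.mul_sub, Matrix.sub_mul, Matrix.mul_add, Matrix.add_mul,
      Matrix.mul_one, Matrix.one_mul, Matrix.mul_assoc]
    abel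
  have hPinv : ((1 + Gᴴ * G)⁻¹).PosDef := hP.inv
  have con1 : (Y - 1).PosSemidef := by
    rw [hY1]; exact hPinv.posSemidef.mul_mul_conjTranspose_same (S * R)
  have con2 : Y.PosDef := by
    have h := Matrix.PosDef.posSemidef_add con1 Matrix.PosDef.one
    rwa [sub_add_cancel] at h
  have hBc : (S * X * Heᴴ)ᴴ = He * (X * S) := by
    simp [conjTranspose_mul, hXh, hSh, Matrix.mul_assoc]
  refine ⟨con1, con2, ?_, ?_⟩
  · have hDpd : (1 + He * X * Heᴴ).PosDef := by rw [hDG]; exact hQ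
    haveI : Invertible (1 + He * X * Heᴴ) := hDpd.isUnit.invertible
    have hB : He * X * S = (S * X * Heᴴ)ᴴ := by rw [hBc, Matrix.mul_assoc]
    rw [hB, Matrix.PosDef.fromBlocks₂₂ _ _ hDpd]
    have hz : 1 + S * X * S - Y
        - S * X * Heᴴ * (1 + He * X * Heᴴ)⁻¹ * (S * X * Heᴴ)ᴴ = 0 := by
      rw [hY, hBc]
      simp only [Matrix.mul_assoc]
      abel
    rw [hz]
    exact Matrix.PosSemidef.zero
  · have hdetD : (1 + He * X * Heᴴ).det = (1 + Gᴴ * G).det := by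
      rw [hDG, ← Matrix.det_one_add_mul_comm]
    have hdetB : (1 + Hb * X * Hbᴴ).det = (1 + Gᴴ * G + R * (S * S) * R).det := by
      have h1 : 1 + Hb * X * Hbᴴ = 1 + (Hb * R) * (Hb * R)ᴴ := by
        rw [conjTranspose_mul, hRh, ← hRR]; simp only [Matrix.mul_assoc]
      rw [h1, Matrix.det_one_add_mul_comm]
      congr 1
      rw [conjTranspose_mul, hRh]
      have h2 : Hbᴴ * Hb = S * S + Heᴴ * He := by rw [hSS]; abel
      calc 1 + R * Hbᴴ * (Hb * R) = 1 + R * (Hbᴴ * Hb) * R := by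
            simp only [Matrix.mul_assoc]
        _ = 1 + R * (S * S + Heᴴ * He) * R := by rw [h2]
        _ = 1 + Gᴴ * G + R * (S * S) * R := by
            rw [hGc, hGdef]
            simp only [Matrix.mul_add, Matrix.add_mul, Matrix.mul_assoc]
            abel
    have hY2 : Y = 1 + (S * R) * ((1 + Gᴴ * G)⁻¹ * (R * S)) := by
      rw [← Matrix.mul_assoc, ← hSRc, ← hY1]; abel
    rw [hY2, Matrix.det_one_add_mul_comm]
    have h3 : 1 + (1 + Gᴴ * G)⁻¹ * (R * S) * (S * R)
        = (1 + Gᴴ * G)⁻¹ * (1 + Gᴴ * G + R * (S * S) * R) := by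
      rw [Matrix.mul_add, Matrix.nonsing_inv_mul _ hPd]
      simp only [Matrix.mul_assoc]
    rw [h3, Matrix.det_mul, Matrix.det_nonsing_inv, hdetD, hdetB,
      Ring.inverse_eq_inv, div_eq_inv_mul]
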